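/- (Pointwise selection principle) Let T ⊆ ℝ be nonempty, (M,d) a metric space, and f_j : T → M a sequence such that for each t ∈ T the set {f_j(t) : j ∈ ℕ} has compact closure in M, and limsup_{j→∞} V_ε(f_j,T) < ∞ for all ε > 0. Then some subsequence of (f_j) converges pointwise on T to a bounded function f : T → M. -/

import Mathlib

open Filter Set
open scoped ENNReal Topology

private lemma lemA {ι : Type*} [Countable ι] {M : Type*} [MetricSpace M] (u : ℕ → ι → M)
    (h : ∀ s : ι, ∃ K : Set M, IsCompact K ∧ ∀ j, u j s ∈ K) :
    ∃ φ : ℕ → ℕ, StrictMono φ ∧ ∀ s, ∃ a, Tendsto (fun i => u (φ i) s) atTop (𝓝 a) := by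
  choose K hK hmem using h
  have hc : IsCompact (Set.univ.pi K) := isCompact_univ_pi hK
  have hmem' : ∀ j, (fun s => u j s) ∈ Set.univ.pi K := fun j s _ => hmem s j
  obtain ⟨a, -, φ, hφ, ha⟩ := hc.tendsto_subseq hmem'
  exact ⟨φ, hφ, fun s => ⟨a s, tendsto_pi_nhds.1 ha s⟩⟩

private lemma helly {κ : Type*} [Countable κ] (v : κ → ℕ → ℝ → ℝ)
    (hm : ∀ k j, Monotone (v k j)) (R : κ → ℝ) (hbd : ∀ k j t, v k j t ∈ Set.Icc 0 (R k)) :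
    ∃ φ : ℕ → ℕ, StrictMono φ ∧ ∀ k t, ∃ a, Tendsto (fun i => v k (φ i) t) atTop (𝓝 a) := by
  obtain ⟨φ₁, hφ₁, hconv⟩ := lemA (ι := κ × ℚ) (fun j p => v p.1 j (p.2 : ℝ))
    (fun p => ⟨Set.Icc 0 (R p.1), isCompact_Icc, fun j => hbd p.1 j p.2⟩)
  choose w hw using hconv
  -- w is monotone in the rational variable, and bounded
  have hwmono : ∀ k, ∀ q q' : ℚ, q ≤ q' → w (k, q) ≤ w (k, q') := by
    intro k q q' hq
    exact le_of_tendsto_of_tendsto' (hw (k, q)) (hw (k, q'))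
      (fun i => hm k (φ₁ i) (by exact_mod_cast hq))
  have hwmem : ∀ k (q : ℚ), w (k, q) ∈ Set.Icc 0 (R k) := by
    intro k q
    exact isClosed_Icc.mem_of_tendsto (hw (k, q))
      (Eventually.of_forall fun i => hbd k (φ₁ i) q)
  -- envelope
  set W : κ → ℝ → ℝ := fun k t => sSup ((fun q : ℚ => w (k, q)) '' {q : ℚ | (q : ℝ) < t}) with hW
  have hne : ∀ (k) (t : ℝ), ((fun q : ℚ => w (k, q)) '' {q : ℚ | (q : ℝ) < t}).Nonempty := by
    intro k t
    obtain ⟨q, hq⟩ := exists_rat_lt t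
    exact ⟨w (k, q), ⟨q, hq, rfl⟩⟩
  have hbdd : ∀ (k) (t : ℝ), BddAbove ((fun q : ℚ => w (k, q)) '' {q : ℚ | (q : ℝ) < t}) := by
    intro k t
    exact ⟨R k, by rintro x ⟨q, -, rfl⟩; exact (hwmem k q).2⟩
  have hWmono : ∀ k, Monotone (W k) := by
    intro k t t' htt'
    exact csSup_le_csSup (hbdd k t') (hne k t)
      (Set.image_mono fun q hq => lt_of_lt_of_le hq htt')
  -- convergence at continuity points of W k
  have hkey : ∀ k t, ContinuousAt (W k) t →
      Tendsto (fun i => v k (φ₁ i) t) atTop (𝓝 (W k t)) := by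
    intro k t hcont
    rw [Metric.tendsto_atTop]
    intro ε hε
    obtain ⟨δ, hδ, hδ'⟩ := Metric.continuousAt_iff.1 hcont (ε / 2) (by linarith)
    -- rational below t with w close to sSup
    obtain ⟨x, hx, hxgt⟩ := exists_lt_of_lt_csSup (hne k t) (show W k t - ε / 2 < W k t by linarith)
    obtain ⟨q, hq, rfl⟩ := hx
    -- rational in (t, t + δ/2)
    obtain ⟨q', hq'1, hq'2⟩ := exists_rat_btwn (show t < t + δ / 2 by linarith)
    have hWs : W k (t + δ / 2) < W k t + ε / 2 := by
      have := hδ' (x := t + δ / 2) (by rw [Real.dist_eq]; rw [abs_of_nonneg (by linarith)]; linarith)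
      rw [Real.dist_eq, abs_sub_lt_iff] at this
      linarith [this.1]
    have hq'le : w (k, q') ≤ W k (t + δ / 2) :=
      le_csSup (hbdd k _) ⟨q', hq'2, rfl⟩
    have h1 := (hw (k, q)).eventually (eventually_gt_nhds hxgt)
    have h2 := (hw (k, q')).eventually (eventually_lt_nhds (show w (k, q') < W k t + ε / 2 from lt_of_le_of_lt hq'le hWs))
    obtain ⟨N, hN⟩ := (h1.and h2).exists_forall_of_atTop
    refine ⟨N, fun n hn => ?_⟩
    obtain ⟨hn1, hn2⟩ := hN n hn
    have hl : v k (φ₁ n) q ≤ v k (φ₁ n) t := hm k (φ₁ n) hq.le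
    have hr : v k (φ₁ n) t ≤ v k (φ₁ n) q' := hm k (φ₁ n) hq'1.le
    rw [Real.dist_eq, abs_sub_lt_iff]
    constructor <;> [linarith; linarith]
  -- exceptional set
  have hE : ∀ k, Set.Countable {t : ℝ | ¬ContinuousAt (W k) t} :=
    fun k => (hWmono k).countable_not_continuousAt
  haveI : ∀ k, Countable {t : ℝ | ¬ContinuousAt (W k) t} := fun k => (hE k).to_subtype
  obtain ⟨φ₂, hφ₂, hconv₂⟩ := lemA (ι := Σ k : κ, {t : ℝ | ¬ContinuousAt (W k) t})
    (fun i p => v p.1 (φ₁ i) (p.2 : ℝ))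
    (fun p => ⟨Set.Icc 0 (R p.1), isCompact_Icc, fun j => hbd p.1 (φ₁ j) p.2⟩)
  refine ⟨φ₁ ∘ φ₂, hφ₁.comp hφ₂, fun k t => ?_⟩
  by_cases ht : ContinuousAt (W k) t
  · exact ⟨W k t, (hkey k t ht).comp hφ₂.tendsto_atTop⟩
  · exact hconv₂ ⟨k, ⟨t, ht⟩⟩

/-- The approximate (ε-)variation: infimum of Jordan variations of functions of
bounded variation uniformly ε-close to `f` on `T` (⊤ if no such function). -/
noncomputable def approxVar {M : Type*} [MetricSpace M] (f : ℝ → M) (T : Set ℝ) (ε : ℝ) : ℝ≥0∞ :=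
  ⨅ (g : ℝ → M) (_ : eVariationOn g T ≠ ⊤ ∧ ∀ t ∈ T, dist (f t) (g t) ≤ ε),
    eVariationOn g T

/-- The oscillation (diameter of the image) of `f` on `T`, valued in `[0,∞]`. -/
noncomputable def oscOn {M : Type*} [MetricSpace M] (f : ℝ → M) (T : Set ℝ) : ℝ≥0∞ :=
  ⨆ s ∈ T, ⨆ t ∈ T, edist (f s) (f t)

private lemma exists_g {M : Type*} [MetricSpace M] {f : ℝ → M} {T : Set ℝ} {ε : ℝ} {B : ℝ≥0∞}
    (h : approxVar f T ε < B) :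
    ∃ g : ℝ → M, eVariationOn g T < B ∧ ∀ t ∈ T, dist (f t) (g t) ≤ ε := by
  rw [approxVar, iInf_lt_iff] at h
  obtain ⟨g, hg⟩ := h
  rw [iInf_lt_iff] at hg
  obtain ⟨⟨-, hdist⟩, hvar⟩ := hg
  exact ⟨g, hvar, hdist⟩

theorem pointwise_selection_principle {M : Type*} [MetricSpace M]
    (T : Set ℝ) (hT : T.Nonempty) (fj : ℕ → ℝ → M)
    (hcpt : ∀ t ∈ T, IsCompact (closure (Set.range fun j => fj j t)))
    (hvar : ∀ ε : ℝ, 0 < ε →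
      Filter.limsup (fun j => approxVar (fj j) T ε) Filter.atTop < ⊤) :
    ∃ φ : ℕ → ℕ, StrictMono φ ∧ ∃ f : ℝ → M,
      (∀ t ∈ T, Tendsto (fun k => fj (φ k) t) atTop (𝓝 (f t))) ∧ oscOn f T < ⊤ := by
  haveI : Nonempty M := ⟨fj 0 hT.choose⟩
  set ε : ℕ → ℝ := fun k => 1 / ((k : ℝ) + 1) with hεdef
  have hεpos : ∀ k, 0 < ε k := fun k => by positivity
  set C : ℕ → ℝ≥0∞ := fun k => limsup (fun j => approxVar (fj j) T (ε k)) atTop with hCdef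
  have hCt : ∀ k, C k < ⊤ := fun k => hvar _ (hεpos k)
  have hCk1 : ∀ k, C k + 1 < ⊤ := fun k => ENNReal.add_lt_top.2 ⟨hCt k, ENNReal.one_lt_top⟩
  have hev : ∀ k, ∀ᶠ j in atTop, approxVar (fj j) T (ε k) < C k + 1 := fun k =>
    Filter.eventually_lt_of_limsup_lt (ENNReal.lt_add_right (hCt k).ne one_ne_zero)
  choose N hN using fun k => eventually_atTop.1 (hev k)
  have hmax : ∀ k j, approxVar (fj (max j (N k))) T (ε k) < C k + 1 :=
    fun k j => hN k _ (le_max_right _ _)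
  choose G hGvar hGdist using fun k j => exists_g (hmax k j)
  have hGdist' : ∀ k j, N k ≤ j → ∀ t ∈ T, dist (fj j t) (G k j t) ≤ ε k := by
    intro k j hj t ht
    have := hGdist k j t ht
    rwa [max_eq_left hj] at this
  have hfin : ∀ k j (X : Set ℝ), X ⊆ T → eVariationOn (G k j) X ≤ C k + 1 :=
    fun k j X hX => (eVariationOn.mono _ hX).trans (hGvar k j).le
  -- the variation functions
  set v : ℕ → ℕ → ℝ → ℝ := fun k j t => (eVariationOn (G k j) (T ∩ Iic t)).toReal with hvdef
  have hvmono : ∀ k j, Monotone (v k j) := by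
    intro k j t t' htt'
    exact ENNReal.toReal_mono
      (ne_top_of_le_ne_top (hCk1 k).ne (hfin k j _ inter_subset_left))
      (eVariationOn.mono _ (Set.inter_subset_inter_right _ (Set.Iic_subset_Iic.2 htt')))
  have hvbd : ∀ k j t, v k j t ∈ Set.Icc 0 ((C k + 1).toReal) := fun k j t =>
    ⟨ENNReal.toReal_nonneg, ENNReal.toReal_mono (hCk1 k).ne (hfin k j _ inter_subset_left)⟩
  -- additivity of variation
  have hadd : ∀ k j, ∀ s ∈ T, ∀ t ∈ T, s ≤ t →
      eVariationOn (G k j) (T ∩ Iic t) =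
        eVariationOn (G k j) (T ∩ Iic s) + eVariationOn (G k j) (T ∩ Icc s t) := by
    intro k j s hs t ht hst
    have hgr : IsGreatest (T ∩ Iic s) s := ⟨⟨hs, le_refl s⟩, fun x hx => hx.2⟩
    have hls : IsLeast (T ∩ Icc s t) s := ⟨⟨hs, le_refl s, hst⟩, fun x hx => hx.2.1⟩
    rw [← eVariationOn.union (G k j) hgr hls,
      ← Set.inter_union_distrib_left, Set.Iic_union_Icc_eq_Iic hst]
  have hkeyd : ∀ k j, ∀ s ∈ T, ∀ t ∈ T, dist (G k j s) (G k j t) ≤ |v k j t - v k j s| := by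
    intro k j s hs t ht
    rcases le_total s t with hst | hst
    case inl =>
      have hadd' := hadd k j s hs t ht hst
      have hb : eVariationOn (G k j) (T ∩ Icc s t) ≠ ⊤ :=
        ne_top_of_le_ne_top (hCk1 k).ne (hfin k j _ inter_subset_left)
      have ha : eVariationOn (G k j) (T ∩ Iic s) ≠ ⊤ :=
        ne_top_of_le_ne_top (hCk1 k).ne (hfin k j _ inter_subset_left)
      have hvd : v k j t - v k j s = (eVariationOn (G k j) (T ∩ Icc s t)).toReal := by
        simp only [hvdef]
        rw [hadd', ENNReal.toReal_add ha hb]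
        ring
      rw [hvd, abs_of_nonneg ENNReal.toReal_nonneg, dist_edist]
      exact ENNReal.toReal_mono hb
        (eVariationOn.edist_le _ ⟨hs, le_refl s, hst⟩ ⟨ht, hst, le_refl t⟩)
    case inr =>
      have hadd' := hadd k j t ht s hs hst
      have hb : eVariationOn (G k j) (T ∩ Icc t s) ≠ ⊤ :=
        ne_top_of_le_ne_top (hCk1 k).ne (hfin k j _ inter_subset_left)
      have ha : eVariationOn (G k j) (T ∩ Iic t) ≠ ⊤ :=
        ne_top_of_le_ne_top (hCk1 k).ne (hfin k j _ inter_subset_left)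
      have hvd : v k j s - v k j t = (eVariationOn (G k j) (T ∩ Icc t s)).toReal := by
        simp only [hvdef]
        rw [hadd', ENNReal.toReal_add ha hb]
        ring
      rw [abs_sub_comm, hvd, abs_of_nonneg ENNReal.toReal_nonneg, dist_comm, dist_edist]
      exact ENNReal.toReal_mono hb
        (eVariationOn.edist_le _ ⟨ht, le_refl t, hst⟩ ⟨hs, hst, le_refl s⟩)
  -- Helly selection on the variation functions
  obtain ⟨φ₁, hφ₁, hconv⟩ := helly v hvmono (fun k => (C k + 1).toReal) hvbd
  choose V hV using hconv
  -- countable set S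
  have hSex : ∃ S : Set ℝ, S ⊆ T ∧ S.Countable ∧
      ∀ (k : ℕ), ∀ t ∈ T, ∀ δ : ℝ, 0 < δ → ∃ s ∈ S, |V k s - V k t| < δ := by
    have hsep : ∀ k : ℕ, ∃ Sk : Set ℝ, Sk ⊆ T ∧ Sk.Countable ∧
        ∀ t ∈ T, ∀ δ : ℝ, 0 < δ → ∃ s ∈ Sk, |V k s - V k t| < δ := by
      intro k
      obtain ⟨D, hDsub, hDc, hDcl⟩ :=
        (TopologicalSpace.IsSeparable.of_separableSpace (V k '' T)).exists_countable_dense_subset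
      haveI := hDc.to_subtype
      have hch : ∀ d : D, ∃ s, s ∈ T ∧ V k s = (d : ℝ) := by
        intro d
        obtain ⟨s, hs, hVs⟩ := hDsub d.2
        exact ⟨s, hs, hVs⟩
      choose F hFT hFV using hch
      refine ⟨Set.range F, by rintro x ⟨d, rfl⟩; exact hFT d, Set.countable_range F, ?_⟩
      intro t ht δ hδ
      have hmem : V k t ∈ closure D := hDcl ⟨t, ht, rfl⟩
      obtain ⟨d, hd, hdist⟩ := Metric.mem_closure_iff.1 hmem δ hδ
      refine ⟨F ⟨d, hd⟩, ⟨⟨d, hd⟩, rfl⟩, ?_⟩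
      rw [hFV ⟨d, hd⟩, abs_sub_comm, ← Real.dist_eq]
      exact hdist
    choose Sk hSkT hSkc hSk using hsep
    exact ⟨⋃ k, Sk k, Set.iUnion_subset hSkT, Set.countable_iUnion hSkc,
      fun k t ht δ hδ => by
        obtain ⟨s, hs, h⟩ := hSk k t ht δ hδ
        exact ⟨s, Set.mem_iUnion.2 ⟨k, hs⟩, h⟩⟩
  obtain ⟨S, hST, hSc, hSapprox⟩ := hSex
  haveI := hSc.to_subtype
  -- selection on S for the fj's
  obtain ⟨φ₂, hφ₂, hconvS⟩ := lemA (ι := ↥S) (fun i s => fj (φ₁ i) (s : ℝ))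
    (fun s => ⟨closure (Set.range fun j => fj j (s : ℝ)), hcpt s (hST s.2),
      fun j => subset_closure ⟨φ₁ j, rfl⟩⟩)
  set ψ : ℕ → ℕ := φ₁ ∘ φ₂ with hψdef
  have hψ : StrictMono ψ := hφ₁.comp hφ₂
  -- Cauchy property
  have hcauchy : ∀ t ∈ T, CauchySeq fun i => fj (ψ i) t := by
    intro t ht
    rw [Metric.cauchySeq_iff]
    intro η hη
    have hδ : 0 < η / 16 := by positivity
    obtain ⟨k, hk⟩ := exists_nat_one_div_lt hδ
    have hεk : ε k < η / 16 := hk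
    obtain ⟨s, hsS, hsV⟩ := hSapprox k t ht (η / 16) hδ
    have hsT : s ∈ T := hST hsS
    have hvt : Tendsto (fun i => v k (ψ i) t) atTop (𝓝 (V k t)) :=
      (hV k t).comp hφ₂.tendsto_atTop
    have hvs : Tendsto (fun i => v k (ψ i) s) atTop (𝓝 (V k s)) :=
      (hV k s).comp hφ₂.tendsto_atTop
    obtain ⟨a, ha⟩ := hconvS ⟨s, hsS⟩
    obtain ⟨N1, h1⟩ := Metric.tendsto_atTop.1 hvt (η / 16) hδ
    obtain ⟨N2, h2⟩ := Metric.tendsto_atTop.1 hvs (η / 16) hδ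
    obtain ⟨N3, h3⟩ := Metric.tendsto_atTop.1 ha (η / 16) hδ
    obtain ⟨N4, h4⟩ := eventually_atTop.1 (hψ.tendsto_atTop.eventually_ge_atTop (N k))
    set I := max (max N1 N2) (max N3 N4) with hI
    have hbound : ∀ i, I ≤ i → dist (fj (ψ i) t) a < 6 * (η / 16) := by
      intro i hi
      have hi1 : N1 ≤ i := le_trans (le_trans (le_max_left _ _) (le_max_left _ _)) hi
      have hi2 : N2 ≤ i := le_trans (le_trans (le_max_right _ _) (le_max_left _ _)) hi
      have hi3 : N3 ≤ i := le_trans (le_trans (le_max_left _ _) (le_max_right _ _)) hi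
      have hi4 : N4 ≤ i := le_trans (le_trans (le_max_right _ _) (le_max_right _ _)) hi
      have e1 : dist (fj (ψ i) t) (G k (ψ i) t) ≤ ε k := hGdist' k (ψ i) (h4 i hi4) t ht
      have e2 : dist (fj (ψ i) s) (G k (ψ i) s) ≤ ε k := hGdist' k (ψ i) (h4 i hi4) s hsT
      have e3 : dist (G k (ψ i) t) (G k (ψ i) s) ≤ |v k (ψ i) s - v k (ψ i) t| :=
        hkeyd k (ψ i) t ht s hsT
      have e4 : |v k (ψ i) s - v k (ψ i) t| < 3 * (η / 16) := by
        have a1 := abs_lt.1 ((Real.dist_eq _ _) ▸ h1 i hi1)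
        have a2 := abs_lt.1 ((Real.dist_eq _ _) ▸ h2 i hi2)
        have a3 := abs_lt.1 hsV
        exact abs_lt.2 ⟨by linarith, by linarith⟩
      have e5 : dist (fj (ψ i) s) a < η / 16 := h3 i hi3
      calc dist (fj (ψ i) t) a
          ≤ dist (fj (ψ i) t) (G k (ψ i) t) + dist (G k (ψ i) t) (G k (ψ i) s)
            + dist (G k (ψ i) s) (fj (ψ i) s) + dist (fj (ψ i) s) a := by
            have t1 := dist_triangle4 (fj (ψ i) t) (G k (ψ i) t) (G k (ψ i) s) (fj (ψ i) s)
            have t2 := dist_triangle (fj (ψ i) t) (fj (ψ i) s) a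
            linarith
        _ < 6 * (η / 16) := by
            rw [dist_comm (G k (ψ i) s) (fj (ψ i) s)]
            linarith
    refine ⟨I, fun m hm n hn => ?_⟩
    calc dist (fj (ψ m) t) (fj (ψ n) t)
        ≤ dist (fj (ψ m) t) a + dist (fj (ψ n) t) a := dist_triangle_right _ _ _
      _ < 6 * (η / 16) + 6 * (η / 16) := add_lt_add (hbound m hm) (hbound n hn)
      _ ≤ η := by linarith
  -- the pointwise limit
  have hlim : ∀ t : ℝ, ∃ a : M, t ∈ T → Tendsto (fun i => fj (ψ i) t) atTop (𝓝 a) := by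
    intro t
    by_cases ht : t ∈ T
    · obtain ⟨a, -, haa⟩ := cauchySeq_tendsto_of_isComplete ((hcpt t ht).isComplete)
        (fun i => subset_closure ⟨ψ i, rfl⟩) (hcauchy t ht)
      exact ⟨a, fun _ => haa⟩
    · exact ⟨Classical.arbitrary M, fun h => absurd h ht⟩
  choose f hf using hlim
  refine ⟨ψ, hψ, f, fun t ht => hf t ht, ?_⟩
  -- boundedness
  have hB : ∀ s ∈ T, ∀ t ∈ T, dist (f s) (f t) ≤ 2 * ε 0 + (C 0 + 1).toReal := by
    intro s hs t ht
    have hd : Tendsto (fun i => dist (fj (ψ i) s) (fj (ψ i) t)) atTop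
        (𝓝 (dist (f s) (f t))) := (hf s hs).dist (hf t ht)
    refine le_of_tendsto hd ?_
    filter_upwards [hψ.tendsto_atTop.eventually_ge_atTop (N 0)] with i hi
    have h1 := hGdist' 0 (ψ i) hi s hs
    have h2 := hGdist' 0 (ψ i) hi t ht
    have h3 : dist (G 0 (ψ i) s) (G 0 (ψ i) t) ≤ (C 0 + 1).toReal := by
      rw [dist_edist]
      exact ENNReal.toReal_mono (hCk1 0).ne
        ((eVariationOn.edist_le _ hs ht).trans (hGvar 0 (ψ i)).le)
    have t1 := dist_triangle4 (fj (ψ i) s) (G 0 (ψ i) s) (G 0 (ψ i) t) (fj (ψ i) t)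
    rw [dist_comm (G 0 (ψ i) t) (fj (ψ i) t)] at t1
    linarith
  refine lt_of_le_of_lt (b := ENNReal.ofReal (2 * ε 0 + (C 0 + 1).toReal)) ?_ ENNReal.ofReal_lt_top
  rw [oscOn]
  refine iSup₂_le fun s hs => iSup₂_le fun t ht => ?_
  rw [edist_dist]
  exact ENNReal.ofReal_le_ofReal (hB s hs t ht)
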